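/- If χ: H → S^1 is a character factoring through H/(t^k-1)H but not factoring through H/(t^l-1)H for any 0 < l < k, then the representation α_{(z,χ)}: Z ⋉ H → U(k) given by (n,h) ↦ z^n S^n diag(χ(h), χ(th), ..., χ(t^{k-1}h)) is irreducible, for any z ∈ S^1. -/

import Mathlib

open Matrix

/-- The `k×k` cyclic permutation matrix raised to the `n`-th power (entries indexed by `ZMod k`). -/
def cycS (k : ℕ) [NeZero k] (n : ℤ) : Matrix (ZMod k) (ZMod k) ℂ :=
  Matrix.of fun i j => if i = j + (n : ZMod k) then 1 else 0

/-- The metabelian representation `α_{(z,χ)} : (n, h) ↦ zⁿ Sⁿ diag(χ(h), χ(th), …, χ(t^{k-1}h))`. -/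
noncomputable def alphaMat {H : Type*} [AddCommGroup H] (k : ℕ) [NeZero k] (t : AddAut H)
    (z : ℂ) (χ : H → ℂ) (n : ℤ) (h : H) : Matrix (ZMod k) (ZMod k) ℂ :=
  z ^ n • (cycS k n * Matrix.diagonal fun i : ZMod k => χ ((i.val • t) h))

/-- If the character `χ` factors through `H/(t^k-1)H` but through no `H/(t^l-1)H` with
`0 < l < k`, then `α_{(z,χ)}` is irreducible for any `z ∈ S¹`. -/
theorem alphaMat_irreducible {H : Type*} [AddCommGroup H] (k : ℕ) [NeZero k]
    (t : AddAut H) (z : ℂ) (hz : ‖z‖ = 1) (χ : H → ℂ)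
    (hχmul : ∀ a b : H, χ (a + b) = χ a * χ b)
    (hχnorm : ∀ a : H, ‖χ a‖ = 1)
    (hχfac : ∀ a : H, χ ((k • t) a) = χ a)
    (hχnofac : ∀ l : ℕ, 0 < l → l < k → ∃ a : H, χ ((l • t) a) ≠ χ a) :
    ∀ W : Submodule ℂ (ZMod k → ℂ),
      (∀ (n : ℤ) (a : H) (v : ZMod k → ℂ), v ∈ W → (alphaMat k t z χ n a).mulVec v ∈ W) →
      W = ⊥ ∨ W = ⊤ := by
  classical
  intro W hW
  -- basic facts about χ and z
  have hχne : ∀ a : H, χ a ≠ 0 := by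
    intro a h0
    have := hχnorm a
    rw [h0] at this; simp at this
  have hχ0 : χ 0 = 1 := by
    have h := hχmul 0 0
    rw [add_zero] at h
    have : χ 0 * χ 0 = χ 0 * 1 := by rw [mul_one, ← h]
    exact (mul_left_cancel₀ (hχne 0) this)
  have hzne : z ≠ 0 := by
    intro h0; rw [h0] at hz; simp at hz
  -- the zero cyclic matrix is the identity
  have hcyc0 : cycS k 0 = 1 := by
    ext i j; simp [cycS, Matrix.one_apply]
  -- diagonal invariance
  have hdiag : ∀ (h : H) (v : ZMod k → ℂ), v ∈ W →
      (fun m : ZMod k => χ ((m.val • t) h) * v m) ∈ W := by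
    intro h v hv
    have := hW 0 h v hv
    have heq : alphaMat k t z χ 0 h =
        Matrix.diagonal fun m : ZMod k => χ ((m.val • t) h) := by
      simp [alphaMat, hcyc0]
    rw [heq] at this
    convert this using 1
    funext m
    rw [Matrix.mulVec_diagonal]
  -- shift invariance
  have hshift : ∀ (i : ZMod k) (c : ℂ), Pi.single i c ∈ W → Pi.single (i + 1) c ∈ W := by
    intro i c hc
    have := hW 1 0 _ hc
    have heq : alphaMat k t z χ 1 0 = z • cycS k 1 := by
      have : (fun m : ZMod k => χ ((m.val • t) (0:H))) = fun _ => (1:ℂ) := by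
        funext m; rw [map_zero, hχ0]
      simp [alphaMat, this, hχ0, Matrix.diagonal_one]
    rw [heq, Matrix.smul_mulVec] at this
    have h2 := W.smul_mem z⁻¹ this
    rw [smul_smul, inv_mul_cancel₀ hzne, one_smul] at h2
    have h3 : (cycS k 1).mulVec (Pi.single i c) = Pi.single (i+1) c := by
      funext m
      simp [cycS, Matrix.mulVec, dotProduct, Pi.single_apply]
    rwa [h3] at h2
  -- separation of characters
  have hsep : ∀ i j : ZMod k, i ≠ j →
      ∃ h : H, χ ((i.val • t) h) ≠ χ ((j.val • t) h) := by
    intro i j hij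
    have hvalne : i.val ≠ j.val := fun h => hij (ZMod.val_injective k h)
    rcases hvalne.lt_or_gt with hlt | hlt
    · -- i.val < j.val : use l = j.val - i.val, swap roles
      obtain ⟨l, hl1, hl2, hl3⟩ : ∃ l : ℕ, 0 < l ∧ l < k ∧ j.val = l + i.val :=
        ⟨j.val - i.val, by omega, by have := ZMod.val_lt j; omega, by omega⟩
      obtain ⟨a, ha⟩ := hχnofac l hl1 hl2
      refine ⟨(i.val • t).symm a, ?_⟩
      have h1 : (i.val • t) ((i.val • t).symm a) = a := AddEquiv.apply_symm_apply _ a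
      have h2 : (j.val • t) ((i.val • t).symm a) = (l • t) a := by
        rw [hl3, add_nsmul, AddAut.add_apply, h1]
      rw [h1, h2]
      exact fun h => ha h.symm
    · obtain ⟨l, hl1, hl2, hl3⟩ : ∃ l : ℕ, 0 < l ∧ l < k ∧ i.val = l + j.val :=
        ⟨i.val - j.val, by omega, by have := ZMod.val_lt i; omega, by omega⟩
      obtain ⟨a, ha⟩ := hχnofac l hl1 hl2
      refine ⟨(j.val • t).symm a, ?_⟩
      have h1 : (j.val • t) ((j.val • t).symm a) = a := AddEquiv.apply_symm_apply _ a
      have h2 : (i.val • t) ((j.val • t).symm a) = (l • t) a := by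
        rw [hl3, add_nsmul, AddAut.add_apply, h1]
      rw [h1, h2]
      exact ha
  -- projection onto a coordinate stays in W
  have hproj : ∀ v ∈ W, ∀ i : ZMod k, Pi.single i (v i) ∈ W := by
    intro v hv i
    have hsep' : ∀ j : ZMod k, ∃ h : H, j ≠ i →
        χ ((i.val • t) h) ≠ χ ((j.val • t) h) := by
      intro j
      by_cases hj : j = i
      · exact ⟨0, fun hc => absurd hj hc⟩
      · obtain ⟨h, hh⟩ := hsep i j (fun hc => hj hc.symm)
        exact ⟨h, fun _ => hh⟩
    choose hfun hh using hsep'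
    set g : ZMod k → ZMod k → ℂ := fun j m =>
      (χ ((m.val • t) (hfun j)) - χ ((j.val • t) (hfun j))) /
      (χ ((i.val • t) (hfun j)) - χ ((j.val • t) (hfun j))) with hg
    have hgii : ∀ j, j ≠ i → g j i = 1 := by
      intro j hj
      have hden : χ ((i.val • t) (hfun j)) - χ ((j.val • t) (hfun j)) ≠ 0 :=
        sub_ne_zero.mpr (hh j hj)
      simp [hg, div_self hden]
    have hgjj : ∀ j, g j j = 0 := by
      intro j; simp [hg]
    have hstep : ∀ j : ZMod k, j ≠ i → ∀ u, u ∈ W → (fun m => g j m * u m) ∈ W := by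
      intro j hj u hu
      set c : ℂ := χ ((i.val • t) (hfun j)) - χ ((j.val • t) (hfun j)) with hcdef
      have hc : c ≠ 0 := sub_ne_zero.mpr (hh j hj)
      have h1 : (fun m : ZMod k => χ ((m.val • t) (hfun j)) * u m) ∈ W := hdiag _ u hu
      have h2 : c⁻¹ • ((fun m : ZMod k => χ ((m.val • t) (hfun j)) * u m)
          - χ ((j.val • t) (hfun j)) • u) ∈ W :=
        W.smul_mem _ (W.sub_mem h1 (W.smul_mem _ hu))
      have heq : (fun m => g j m * u m) = c⁻¹ • ((fun m : ZMod k =>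
          χ ((m.val • t) (hfun j)) * u m) - χ ((j.val • t) (hfun j)) • u) := by
        funext m
        simp only [Pi.smul_apply, Pi.sub_apply, smul_eq_mul, hg, ← hcdef, div_eq_mul_inv]
        ring
      rwa [heq]
    have hind : ∀ s : Finset (ZMod k), i ∉ s →
        (fun m => (∏ j ∈ s, g j m) * v m) ∈ W := by
      intro s
      induction s using Finset.induction_on with
      | empty => intro _; simpa using hv
      | @insert a s' ha ih =>
        intro hins
        have hia : a ≠ i := fun h => hins (by simp [h])
        have his : i ∉ s' := fun h => hins (Finset.mem_insert_of_mem h)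
        have := hstep a hia _ (ih his)
        convert this using 1
        funext m
        rw [Finset.prod_insert ha]
        ring
    have := hind (Finset.univ.erase i) (Finset.notMem_erase i _)
    have heq : (fun m => (∏ j ∈ Finset.univ.erase i, g j m) * v m) = Pi.single i (v i) := by
      funext m
      by_cases hm : m = i
      · subst hm
        rw [Finset.prod_eq_one (fun j hj => hgii j (Finset.ne_of_mem_erase hj)), one_mul,
          Pi.single_eq_same]
      · have hz0 : (∏ j ∈ Finset.univ.erase i, g j m) = 0 :=
          Finset.prod_eq_zero (Finset.mem_erase.mpr ⟨hm, Finset.mem_univ m⟩) (hgjj m)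
        rw [hz0, zero_mul, Pi.single_eq_of_ne hm]
    rwa [heq] at this
  -- conclude
  by_cases hbot : W = ⊥
  · exact Or.inl hbot
  · right
    obtain ⟨v, hv, hvne⟩ := Submodule.exists_mem_ne_zero_of_ne_bot hbot
    obtain ⟨i, hi⟩ : ∃ i, v i ≠ 0 := by
      by_contra h
      push_neg at h
      exact hvne (funext h)
    have h1 : Pi.single i (1:ℂ) ∈ W := by
      have := W.smul_mem (v i)⁻¹ (hproj v hv i)
      rwa [← Pi.single_smul, smul_eq_mul, inv_mul_cancel₀ hi] at this
    have hall : ∀ n : ℕ, Pi.single (i + (n : ZMod k)) (1:ℂ) ∈ W := by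
      intro n
      induction n with
      | zero => simpa using h1
      | succ n ih =>
        have := hshift _ _ ih
        rwa [show i + ((n:ZMod k)) + 1 = i + ((n+1 : ℕ) : ZMod k) by push_cast; ring] at this
    have halls : ∀ j : ZMod k, Pi.single j (1:ℂ) ∈ W := by
      intro j
      have := hall (j - i).val
      rwa [show i + (((j - i).val : ℕ) : ZMod k) = j by
        rw [ZMod.natCast_val, ZMod.cast_id]; ring] at this
    rw [Submodule.eq_top_iff']
    intro u
    have : u = ∑ j : ZMod k, u j • (Pi.single j 1 : ZMod k → ℂ) := by
      conv_lhs => rw [← Finset.univ_sum_single u]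
      refine Finset.sum_congr rfl fun j _ => ?_
      rw [← Pi.single_smul, smul_eq_mul, mul_one]
    rw [this]
    exact Submodule.sum_mem W fun j _ => W.smul_mem _ (halls j)
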